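/- Let σ > 0 and let φ(z) = (1/√(2πσ²))·e^{−z²/(2σ²)} be the density of N(0,σ²). For ξ ∈ ℝ define p₀(ξ) = ∫_{−∞}^{ξ} φ(z) dz, Q(ξ) = 1 − p₀(ξ), the centroid ẑ(ξ) = ( ∫_{ξ}^{∞} z·φ(z) dz ) / Q(ξ), the entropy R(ξ) = −p₀(ξ)·log₂ p₀(ξ) − Q(ξ)·log₂ Q(ξ), and the distortion D(ξ) = ∫_{−∞}^{ξ} z²·φ(z) dz + ∫_{ξ}^{∞} (z − ẑ(ξ))²·φ(z) dz. Then lim_{ξ → ∞} R′(ξ)/D′(ξ) = −1/(2σ²·ln 2); i.e., the slope of the operational rate-distortion curve of the binary threshold quantizer coincides, at zero rate, with the slope −log₂(e)/(2σ²) of the Gaussian rate-distortion function. -/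

import Mathlib

/-- The density `φ(z) = (1/√(2πσ²))·e^{−z²/(2σ²)}` of `N(0,σ²)`. -/
noncomputable def gaussDensity (σ : ℝ) (z : ℝ) : ℝ :=
  (1 / Real.sqrt (2 * Real.pi * σ ^ 2)) * Real.exp (-z ^ 2 / (2 * σ ^ 2))

/-- The probability `p₀(ξ) = ∫_{−∞}^{ξ} φ(z) dz` of the lower quantizer cell. -/
noncomputable def cellProb (σ ξ : ℝ) : ℝ := ∫ z in Set.Iic ξ, gaussDensity σ z

/-- The centroid `ẑ(ξ) = (∫_{ξ}^{∞} z·φ(z) dz) / Q(ξ)` of the upper cell, `Q(ξ) = 1 − p₀(ξ)`. -/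
noncomputable def centroid (σ ξ : ℝ) : ℝ :=
  (∫ z in Set.Ioi ξ, z * gaussDensity σ z) / (1 - cellProb σ ξ)

/-- The entropy `R(ξ) = −p₀·log₂ p₀ − Q·log₂ Q` of the binary threshold quantizer. -/
noncomputable def quantEntropy (σ ξ : ℝ) : ℝ :=
  -cellProb σ ξ * Real.logb 2 (cellProb σ ξ) -
    (1 - cellProb σ ξ) * Real.logb 2 (1 - cellProb σ ξ)

/-- The distortion `D(ξ) = ∫_{−∞}^{ξ} z²·φ(z) dz + ∫_{ξ}^{∞} (z − ẑ(ξ))²·φ(z) dz` of the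
binary threshold quantizer. -/
noncomputable def quantDistortion (σ ξ : ℝ) : ℝ :=
  (∫ z in Set.Iic ξ, z ^ 2 * gaussDensity σ z) +
    ∫ z in Set.Ioi ξ, (z - centroid σ ξ) ^ 2 * gaussDensity σ z

open Real MeasureTheory Filter Set

namespace TQS

variable {σ : ℝ}

lemma gauss_eq (z : ℝ) :
    gaussDensity σ z = (1 / Real.sqrt (2 * π * σ ^ 2)) * Real.exp (-((2 * σ ^ 2)⁻¹) * z ^ 2) := by
  rw [gaussDensity]
  ring_nf

lemma b_pos (hσ : 0 < σ) : 0 < (2 * σ ^ 2)⁻¹ := by positivity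

lemma sqrt_pos' (hσ : 0 < σ) : 0 < Real.sqrt (2 * π * σ ^ 2) := by
  apply Real.sqrt_pos.2; positivity

lemma phi_pos (hσ : 0 < σ) (z : ℝ) : 0 < gaussDensity σ z := by
  rw [gaussDensity]
  have := sqrt_pos' (σ := σ) hσ
  positivity

lemma phi_cont : Continuous (gaussDensity σ) := by
  unfold gaussDensity
  fun_prop

lemma hasDerivAt_phi (hσ : 0 < σ) (z : ℝ) :
    HasDerivAt (gaussDensity σ) (-(z / σ ^ 2) * gaussDensity σ z) z := by
  have h1 : HasDerivAt (fun z : ℝ => -z ^ 2 / (2 * σ ^ 2)) (-(z / σ ^ 2)) z := by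
    have := ((hasDerivAt_pow 2 z).neg).div_const (2 * σ ^ 2)
    refine this.congr_deriv ?_
    have : σ ^ 2 ≠ 0 := by positivity
    field_simp
    ring
  have h2 := (h1.exp).const_mul (1 / Real.sqrt (2 * π * σ ^ 2))
  have : (gaussDensity σ) = fun z : ℝ => (1 / Real.sqrt (2 * π * σ ^ 2)) * Real.exp (-z ^ 2 / (2 * σ ^ 2)) := rfl
  rw [this]
  refine h2.congr_deriv ?_
  ring

lemma integrable_phi (hσ : 0 < σ) : Integrable (gaussDensity σ) := by
  have := (integrable_exp_neg_mul_sq (b_pos hσ)).const_mul (1 / Real.sqrt (2 * π * σ ^ 2))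
  exact this.congr (by filter_upwards with z; rw [gauss_eq])

lemma integrable_id_mul_phi (hσ : 0 < σ) : Integrable (fun z => z * gaussDensity σ z) := by
  have := (integrable_mul_exp_neg_mul_sq (b_pos hσ)).const_mul (1 / Real.sqrt (2 * π * σ ^ 2))
  exact this.congr (by filter_upwards with z; rw [gauss_eq]; ring)

lemma integrable_sq_mul_phi (hσ : 0 < σ) : Integrable (fun z => z ^ 2 * gaussDensity σ z) := by
  have h := (integrable_rpow_mul_exp_neg_mul_sq (b_pos hσ)
    (by norm_num : (-1 : ℝ) < 2)).const_mul (1 / Real.sqrt (2 * π * σ ^ 2))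
  refine h.congr (by filter_upwards with z; rw [gauss_eq]; rw [show ((2:ℝ)) = ((2:ℕ):ℝ) by norm_num, Real.rpow_natCast]; ring)

lemma tendsto_phi (hσ : 0 < σ) : Tendsto (gaussDensity σ) atTop (nhds 0) := by
  have h1 : Tendsto (fun z : ℝ => -((2 * σ ^ 2)⁻¹) * z ^ 2) atTop atBot := by
    apply Tendsto.const_mul_atTop_of_neg (neg_neg_iff_pos.mpr (b_pos hσ))
    exact tendsto_pow_atTop (two_ne_zero)
  have := (Real.tendsto_exp_atBot.comp h1).const_mul (1 / Real.sqrt (2 * π * σ ^ 2))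
  rw [mul_zero] at this
  apply this.congr
  intro z
  simp only [Function.comp]
  rw [gauss_eq]

lemma tendsto_id_mul_phi (hσ : 0 < σ) :
    Tendsto (fun z => z * gaussDensity σ z) atTop (nhds 0) := by
  have h := rpow_mul_exp_neg_mul_sq_isLittleO_exp_neg (b_pos hσ) 1
  have h2 : Tendsto (fun x : ℝ => Real.exp (-(1 / 2) * x)) atTop (nhds 0) := by
    have h0 : Tendsto (fun x : ℝ => -(1 / 2 : ℝ) * x) atTop atBot := by
      apply Tendsto.const_mul_atTop_of_neg (by norm_num : (-(1/2):ℝ) < 0) tendsto_id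
    exact Real.tendsto_exp_atBot.comp h0
  have h3 : Tendsto (fun x : ℝ => x ^ (1:ℝ) * Real.exp (-((2 * σ ^ 2)⁻¹) * x ^ 2)) atTop (nhds 0) :=
    h.tendsto_zero_of_tendsto h2
  have h4 := h3.const_mul (1 / Real.sqrt (2 * π * σ ^ 2))
  rw [mul_zero] at h4
  apply h4.congr'
  filter_upwards [eventually_gt_atTop 0] with z hz
  rw [gauss_eq, Real.rpow_one]; ring

lemma integral_phi (hσ : 0 < σ) : ∫ z, gaussDensity σ z = 1 := by
  have h := integral_gaussian ((2 * σ ^ 2)⁻¹)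
  have heq : ∫ z, gaussDensity σ z
      = (1 / Real.sqrt (2 * π * σ ^ 2)) * ∫ z, Real.exp (-((2 * σ ^ 2)⁻¹) * z ^ 2) := by
    rw [← integral_const_mul]
    congr 1; ext z; rw [gauss_eq]
  rw [heq, h]
  rw [show π / (2 * σ ^ 2)⁻¹ = 2 * π * σ ^ 2 by field_simp]
  rw [one_div, inv_mul_cancel₀ (sqrt_pos' hσ).ne']


/-- FTC for `ξ ↦ ∫_{Iic ξ} f`. -/
lemma hasDerivAt_integral_Iic {f : ℝ → ℝ} (hint : Integrable f) (hc : Continuous f) (ξ : ℝ) :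
    HasDerivAt (fun x => ∫ z in Set.Iic x, f z) (f ξ) ξ := by
  have key : (fun x => ∫ z in Set.Iic x, f z)
      = fun x => (∫ z in Set.Iic (0:ℝ), f z) + ∫ z in (0:ℝ)..x, f z := by
    funext x
    rw [← intervalIntegral.integral_Iic_sub_Iic hint.integrableOn hint.integrableOn]
    ring
  rw [key]
  have h : HasDerivAt (fun u => ∫ z in (0:ℝ)..u, f z) (f ξ) ξ :=
    intervalIntegral.integral_hasDerivAt_right hint.intervalIntegrable
      (hc.stronglyMeasurableAtFilter _ _) hc.continuousAt
  exact h.const_add _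


noncomputable def Qi (σ ξ : ℝ) : ℝ := ∫ z in Set.Ioi ξ, gaussDensity σ z

lemma Qi_pos (hσ : 0 < σ) (ξ : ℝ) : 0 < Qi σ ξ := by
  rw [Qi, setIntegral_pos_iff_support_of_nonneg_ae]
  · have : (Function.support fun z => gaussDensity σ z) = Set.univ := by
      ext z; simp [Function.support, (phi_pos hσ z).ne']
    rw [this, Set.univ_inter]
    simp [Real.volume_Ioi]
  · filter_upwards with z using (phi_pos hσ z).le
  · exact (integrable_phi hσ).integrableOn

lemma cellProb_pos (hσ : 0 < σ) (ξ : ℝ) : 0 < ∫ z in Set.Iic ξ, gaussDensity σ z := by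
  rw [setIntegral_pos_iff_support_of_nonneg_ae]
  · have : (Function.support fun z => gaussDensity σ z) = Set.univ := by
      ext z; simp [Function.support, (phi_pos hσ z).ne']
    rw [this, Set.univ_inter]
    simp [Real.volume_Iic]
  · filter_upwards with z using (phi_pos hσ z).le
  · exact (integrable_phi hσ).integrableOn

lemma cellProb_add_Qi (hσ : 0 < σ) (ξ : ℝ) :
    (∫ z in Set.Iic ξ, gaussDensity σ z) + Qi σ ξ = 1 := by
  rw [Qi, intervalIntegral.integral_Iic_add_Ioi (integrable_phi hσ).integrableOn
    (integrable_phi hσ).integrableOn, integral_phi hσ]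

lemma M_eq (hσ : 0 < σ) (ξ : ℝ) :
    ∫ z in Set.Ioi ξ, z * gaussDensity σ z = σ ^ 2 * gaussDensity σ ξ := by
  have hσ2 : (σ:ℝ) ^ 2 ≠ 0 := by positivity
  have hd : ∀ x ∈ Set.Ioi ξ, HasDerivAt (fun z => -σ ^ 2 * gaussDensity σ z)
      (x * gaussDensity σ x) x := by
    intro x _
    have := (hasDerivAt_phi hσ x).const_mul (-σ ^ 2)
    refine this.congr_deriv ?_
    field_simp
  have hcont : ContinuousWithinAt (fun z => -σ ^ 2 * gaussDensity σ z) (Set.Ici ξ) ξ :=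
    ((continuous_const.mul phi_cont).continuousAt).continuousWithinAt
  have hten : Tendsto (fun z => -σ ^ 2 * gaussDensity σ z) atTop (nhds 0) := by
    simpa using (tendsto_phi hσ).const_mul (-σ ^ 2)
  have := MeasureTheory.integral_Ioi_of_hasDerivAt_of_tendsto hcont hd
    ((integrable_id_mul_phi hσ).integrableOn) hten
  rw [this]; ring

lemma sq_sub_eq (hσ : 0 < σ) (ξ : ℝ) :
    ∫ z in Set.Ioi ξ, (z ^ 2 - σ ^ 2) * gaussDensity σ z = σ ^ 2 * ξ * gaussDensity σ ξ := by
  have hd : ∀ x ∈ Set.Ioi ξ, HasDerivAt (fun z => -σ ^ 2 * (z * gaussDensity σ z))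
      ((x ^ 2 - σ ^ 2) * gaussDensity σ x) x := by
    intro x _
    have h1 : HasDerivAt (fun z : ℝ => z * gaussDensity σ z)
        (1 * gaussDensity σ x + x * (-(x / σ ^ 2) * gaussDensity σ x)) x :=
      (hasDerivAt_id x).mul (hasDerivAt_phi hσ x)
    have := h1.const_mul (-σ ^ 2)
    refine this.congr_deriv ?_
    have hσ2 : (σ:ℝ) ^ 2 ≠ 0 := by positivity
    field_simp
    ring
  have hcont : ContinuousWithinAt (fun z => -σ ^ 2 * (z * gaussDensity σ z)) (Set.Ici ξ) ξ :=
    ((continuous_const.mul (continuous_id.mul phi_cont)).continuousAt).continuousWithinAt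
  have hten : Tendsto (fun z => -σ ^ 2 * (z * gaussDensity σ z)) atTop (nhds 0) := by
    simpa using (tendsto_id_mul_phi hσ).const_mul (-σ ^ 2)
  have hint : IntegrableOn (fun z => (z ^ 2 - σ ^ 2) * gaussDensity σ z) (Set.Ioi ξ) := by
    have := ((integrable_sq_mul_phi hσ).sub ((integrable_phi hσ).const_mul (σ ^ 2))).integrableOn
      (s := Set.Ioi ξ)
    exact this.congr_fun (fun z _ => by simp only [Pi.sub_apply]; ring) measurableSet_Ioi
  have := MeasureTheory.integral_Ioi_of_hasDerivAt_of_tendsto hcont hd hint hten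
  rw [this]; ring

lemma T_eq (hσ : 0 < σ) (ξ : ℝ) :
    ∫ z in Set.Ioi ξ, z ^ 2 * gaussDensity σ z
      = σ ^ 2 * Qi σ ξ + σ ^ 2 * ξ * gaussDensity σ ξ := by
  have h1 : ∀ z : ℝ, z ^ 2 * gaussDensity σ z
      = (z ^ 2 - σ ^ 2) * gaussDensity σ z + σ ^ 2 * gaussDensity σ z := by intro z; ring
  have hint1 : IntegrableOn (fun z => (z ^ 2 - σ ^ 2) * gaussDensity σ z) (Set.Ioi ξ) := by
    have := ((integrable_sq_mul_phi hσ).sub ((integrable_phi hσ).const_mul (σ ^ 2))).integrableOn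
      (s := Set.Ioi ξ)
    exact this.congr_fun (fun z _ => by simp only [Pi.sub_apply]; ring) measurableSet_Ioi
  have hint2 : IntegrableOn (fun z => σ ^ 2 * gaussDensity σ z) (Set.Ioi ξ) :=
    ((integrable_phi hσ).const_mul _).integrableOn
  calc ∫ z in Set.Ioi ξ, z ^ 2 * gaussDensity σ z
      = ∫ z in Set.Ioi ξ, ((z ^ 2 - σ ^ 2) * gaussDensity σ z + σ ^ 2 * gaussDensity σ z) := by
        congr 1; funext z; exact h1 z
    _ = (∫ z in Set.Ioi ξ, (z ^ 2 - σ ^ 2) * gaussDensity σ z)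
          + ∫ z in Set.Ioi ξ, σ ^ 2 * gaussDensity σ z := integral_add hint1 hint2
    _ = σ ^ 2 * ξ * gaussDensity σ ξ + σ ^ 2 * Qi σ ξ := by
        rw [sq_sub_eq hσ ξ, integral_const_mul]; rfl
    _ = σ ^ 2 * Qi σ ξ + σ ^ 2 * ξ * gaussDensity σ ξ := by ring

lemma mills_upper (hσ : 0 < σ) {ξ : ℝ} (hξ : 0 < ξ) :
    Qi σ ξ ≤ σ ^ 2 * gaussDensity σ ξ / ξ := by
  have h1 : Qi σ ξ ≤ ∫ z in Set.Ioi ξ, (z / ξ) * gaussDensity σ z := by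
    rw [Qi]
    apply setIntegral_mono_on (integrable_phi hσ).integrableOn
    · have : IntegrableOn (fun z => (1/ξ) * (z * gaussDensity σ z)) (Set.Ioi ξ) :=
        ((integrable_id_mul_phi hσ).const_mul _).integrableOn
      exact this.congr_fun (fun z _ => by ring) measurableSet_Ioi
    · exact measurableSet_Ioi
    · intro z hz
      have hz' : ξ ≤ z := le_of_lt hz
      have : (1:ℝ) ≤ z / ξ := (one_le_div hξ).2 hz'
      nlinarith [phi_pos hσ z]
  have h2 : ∫ z in Set.Ioi ξ, (z / ξ) * gaussDensity σ z = σ ^ 2 * gaussDensity σ ξ / ξ := by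
    have : ∀ z : ℝ, (z / ξ) * gaussDensity σ z = (1/ξ) * (z * gaussDensity σ z) := by
      intro z; ring
    simp_rw [this]
    rw [integral_const_mul, M_eq hσ ξ]
    ring
  linarith


lemma hasDerivAt_millsAux (hσ : 0 < σ) (z : ℝ) :
    HasDerivAt (fun z => σ ^ 2 * z / (z ^ 2 + σ ^ 2) * gaussDensity σ z)
      (gaussDensity σ z * (2 * σ ^ 4 / (z ^ 2 + σ ^ 2) ^ 2 - 1)) z := by
  have hden : z ^ 2 + σ ^ 2 ≠ 0 := by positivity
  have hσ2 : (σ:ℝ) ^ 2 ≠ 0 := by positivity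
  have hq : HasDerivAt (fun z : ℝ => σ ^ 2 * z / (z ^ 2 + σ ^ 2))
      ((σ ^ 2 * (z ^ 2 + σ ^ 2) - σ ^ 2 * z * (2 * z)) / (z ^ 2 + σ ^ 2) ^ 2) z := by
    have hnum : HasDerivAt (fun z : ℝ => σ ^ 2 * z) (σ ^ 2) z := by
      simpa using (hasDerivAt_id z).const_mul (σ ^ 2)
    have hden' : HasDerivAt (fun z : ℝ => z ^ 2 + σ ^ 2) (2 * z) z := by
      simpa using (hasDerivAt_pow 2 z).add_const (σ ^ 2)
    have := hnum.div hden' hden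
    exact this
  have := hq.mul (hasDerivAt_phi hσ z)
  refine this.congr_deriv ?_
  field_simp
  ring

lemma millsAux_tendsto (hσ : 0 < σ) :
    Tendsto (fun z => σ ^ 2 * z / (z ^ 2 + σ ^ 2) * gaussDensity σ z) atTop (nhds 0) := by
  apply tendsto_of_tendsto_of_tendsto_of_le_of_le' tendsto_const_nhds
    ((tendsto_phi hσ).const_mul (σ ^ 2) |>.congr (fun z => rfl) |>.mono_right (by rw [mul_zero]))
  · filter_upwards [eventually_gt_atTop (0:ℝ)] with z hz
    have h1 : 0 < z ^ 2 + σ ^ 2 := by positivity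
    have h2 : 0 ≤ σ ^ 2 * z := by positivity
    exact mul_nonneg (div_nonneg h2 h1.le) (phi_pos hσ z).le
  · filter_upwards [eventually_ge_atTop (1:ℝ)] with z hz
    have hz0 : (0:ℝ) < z := lt_of_lt_of_le one_pos hz
    have h1 : 0 < z ^ 2 + σ ^ 2 := by positivity
    have h2 : σ ^ 2 * z / (z ^ 2 + σ ^ 2) ≤ σ ^ 2 := by
      rw [div_le_iff₀ h1]
      have hz2 : z ≤ z ^ 2 := by nlinarith
      nlinarith [mul_le_mul_of_nonneg_left hz2 (sq_nonneg σ), sq_nonneg σ, sq_nonneg (σ^2)]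
    nlinarith [phi_pos hσ z, mul_le_mul_of_nonneg_right h2 (phi_pos hσ z).le]

lemma millsAux_deriv_bound (hσ : 0 < σ) (z : ℝ) :
    |gaussDensity σ z * (2 * σ ^ 4 / (z ^ 2 + σ ^ 2) ^ 2 - 1)| ≤ gaussDensity σ z := by
  have h1 : (0:ℝ) < z ^ 2 + σ ^ 2 := by positivity
  have h2 : 0 < 2 * σ ^ 4 / (z ^ 2 + σ ^ 2) ^ 2 := by positivity
  have h3 : 2 * σ ^ 4 / (z ^ 2 + σ ^ 2) ^ 2 ≤ 2 := by
    rw [div_le_iff₀ (by positivity)]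
    nlinarith [sq_nonneg z, sq_nonneg (z^2), sq_nonneg σ, sq_nonneg (z^2 - σ^2)]
  rw [abs_mul, abs_of_pos (phi_pos hσ z)]
  have : |2 * σ ^ 4 / (z ^ 2 + σ ^ 2) ^ 2 - 1| ≤ 1 := by
    rw [abs_le]; constructor <;> linarith
  nlinarith [phi_pos hσ z]

lemma mills_lower (hσ : 0 < σ) (ξ : ℝ) :
    σ ^ 2 * ξ / (ξ ^ 2 + σ ^ 2) * gaussDensity σ ξ ≤ Qi σ ξ := by
  set g' : ℝ → ℝ := fun z => gaussDensity σ z * (2 * σ ^ 4 / (z ^ 2 + σ ^ 2) ^ 2 - 1) with hg'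
  have hcontg' : Continuous g' := by
    apply phi_cont.mul
    apply Continuous.sub _ continuous_const
    apply Continuous.div continuous_const (by fun_prop)
    intro z
    positivity
  have hintg' : IntegrableOn g' (Set.Ioi ξ) := by
    apply (Integrable.mono' (integrable_phi hσ) hcontg'.aestronglyMeasurable ?_).integrableOn
    filter_upwards with z
    rw [Real.norm_eq_abs]
    exact millsAux_deriv_bound hσ z
  have hcont : ContinuousWithinAt (fun z => σ ^ 2 * z / (z ^ 2 + σ ^ 2) * gaussDensity σ z)
      (Set.Ici ξ) ξ := by
    apply ContinuousAt.continuousWithinAt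
    apply ContinuousAt.mul _ phi_cont.continuousAt
    apply ContinuousAt.div (by fun_prop) (by fun_prop)
    positivity
  have key := MeasureTheory.integral_Ioi_of_hasDerivAt_of_tendsto hcont
    (fun x _ => hasDerivAt_millsAux hσ x) hintg' (millsAux_tendsto hσ)
  have hnonneg : 0 ≤ ∫ z in Set.Ioi ξ, (gaussDensity σ z + g' z) := by
    apply setIntegral_nonneg measurableSet_Ioi
    intro z _
    have h1 : (0:ℝ) < z ^ 2 + σ ^ 2 := by positivity
    have h2 : 0 < 2 * σ ^ 4 / (z ^ 2 + σ ^ 2) ^ 2 := by positivity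
    have := phi_pos hσ z
    rw [hg']
    nlinarith
  have hsplit : ∫ z in Set.Ioi ξ, (gaussDensity σ z + g' z) = Qi σ ξ + ∫ z in Set.Ioi ξ, g' z :=
    integral_add (integrable_phi hσ).integrableOn hintg'
  rw [hsplit, key] at hnonneg
  linarith


lemma one_sub_cellProb (hσ : 0 < σ) (ξ : ℝ) : 1 - cellProb σ ξ = Qi σ ξ := by
  have := cellProb_add_Qi hσ ξ
  rw [cellProb]
  linarith

lemma cellProb_lt_one (hσ : 0 < σ) (ξ : ℝ) : cellProb σ ξ < 1 := by
  have := Qi_pos hσ ξ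
  have := one_sub_cellProb hσ ξ
  linarith

lemma cellProb_pos' (hσ : 0 < σ) (ξ : ℝ) : 0 < cellProb σ ξ := cellProb_pos hσ ξ

lemma hasDerivAt_cellProb (hσ : 0 < σ) (ξ : ℝ) :
    HasDerivAt (cellProb σ) (gaussDensity σ ξ) ξ :=
  hasDerivAt_integral_Iic (integrable_phi hσ) phi_cont ξ

lemma hasDerivAt_Qi (hσ : 0 < σ) (ξ : ℝ) :
    HasDerivAt (Qi σ) (-gaussDensity σ ξ) ξ := by
  have heq : Qi σ = fun ξ => 1 - cellProb σ ξ := funext fun ξ => (one_sub_cellProb hσ ξ).symm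
  rw [heq]
  simpa using (hasDerivAt_cellProb hσ ξ).const_sub 1

lemma distortion_eq (hσ : 0 < σ) (ξ : ℝ) :
    quantDistortion σ ξ = (∫ z in Set.Iic ξ, z ^ 2 * gaussDensity σ z)
      + σ ^ 2 * Qi σ ξ + σ ^ 2 * ξ * gaussDensity σ ξ
      - (σ ^ 2 * gaussDensity σ ξ) ^ 2 / Qi σ ξ := by
  have hQ := Qi_pos hσ ξ
  have hc : centroid σ ξ = σ ^ 2 * gaussDensity σ ξ / Qi σ ξ := by
    rw [centroid, one_sub_cellProb hσ ξ, M_eq hσ ξ]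
  have hint1 : IntegrableOn (fun z => z ^ 2 * gaussDensity σ z) (Set.Ioi ξ) :=
    (integrable_sq_mul_phi hσ).integrableOn
  have hint2 : IntegrableOn (fun z => (- (2 * centroid σ ξ)) * (z * gaussDensity σ z)
      + (centroid σ ξ) ^ 2 * gaussDensity σ z) (Set.Ioi ξ) :=
    (((integrable_id_mul_phi hσ).const_mul _).add
      ((integrable_phi hσ).const_mul _)).integrableOn
  have hexp : ∫ z in Set.Ioi ξ, (z - centroid σ ξ) ^ 2 * gaussDensity σ z
      = (∫ z in Set.Ioi ξ, z ^ 2 * gaussDensity σ z)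
        + ((- (2 * centroid σ ξ)) * ∫ z in Set.Ioi ξ, z * gaussDensity σ z)
        + (centroid σ ξ) ^ 2 * Qi σ ξ := by
    calc ∫ z in Set.Ioi ξ, (z - centroid σ ξ) ^ 2 * gaussDensity σ z
        = ∫ z in Set.Ioi ξ, (z ^ 2 * gaussDensity σ z
            + ((- (2 * centroid σ ξ)) * (z * gaussDensity σ z)
              + (centroid σ ξ) ^ 2 * gaussDensity σ z)) := by
          congr 1; funext z; ring
      _ = (∫ z in Set.Ioi ξ, z ^ 2 * gaussDensity σ z)
            + ∫ z in Set.Ioi ξ, ((- (2 * centroid σ ξ)) * (z * gaussDensity σ z)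
              + (centroid σ ξ) ^ 2 * gaussDensity σ z) := integral_add hint1 hint2
      _ = (∫ z in Set.Ioi ξ, z ^ 2 * gaussDensity σ z)
            + ((∫ z in Set.Ioi ξ, (- (2 * centroid σ ξ)) * (z * gaussDensity σ z))
              + ∫ z in Set.Ioi ξ, (centroid σ ξ) ^ 2 * gaussDensity σ z) := by
          rw [integral_add ((integrable_id_mul_phi hσ).const_mul _).integrableOn
            ((integrable_phi hσ).const_mul _).integrableOn]
      _ = (∫ z in Set.Ioi ξ, z ^ 2 * gaussDensity σ z)
            + ((- (2 * centroid σ ξ)) * ∫ z in Set.Ioi ξ, z * gaussDensity σ z)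
            + (centroid σ ξ) ^ 2 * Qi σ ξ := by
          rw [integral_const_mul, integral_const_mul, Qi]
          ring
  rw [quantDistortion, hexp, T_eq hσ ξ, M_eq hσ ξ, hc]
  field_simp
  ring

lemma hasDerivAt_distortion (hσ : 0 < σ) (ξ : ℝ) :
    HasDerivAt (quantDistortion σ)
      (σ ^ 2 * gaussDensity σ ξ ^ 2 * (2 * ξ * Qi σ ξ - σ ^ 2 * gaussDensity σ ξ)
        / Qi σ ξ ^ 2) ξ := by
  have hQ := Qi_pos hσ ξ
  have heq : quantDistortion σ = fun ξ => (∫ z in Set.Iic ξ, z ^ 2 * gaussDensity σ z)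
      + σ ^ 2 * Qi σ ξ + σ ^ 2 * ξ * gaussDensity σ ξ
      - (σ ^ 2 * gaussDensity σ ξ) ^ 2 / Qi σ ξ := funext fun ξ => distortion_eq hσ ξ
  rw [heq]
  have h1 : HasDerivAt (fun x => ∫ z in Set.Iic x, z ^ 2 * gaussDensity σ z)
      (ξ ^ 2 * gaussDensity σ ξ) ξ :=
    hasDerivAt_integral_Iic (integrable_sq_mul_phi hσ) ((continuous_pow 2).mul phi_cont) ξ
  have h2 : HasDerivAt (fun x => σ ^ 2 * Qi σ x) (σ ^ 2 * (-gaussDensity σ ξ)) ξ :=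
    (hasDerivAt_Qi hσ ξ).const_mul _
  have h3 : HasDerivAt (fun x => σ ^ 2 * (x * gaussDensity σ x))
      (σ ^ 2 * (1 * gaussDensity σ ξ + ξ * (-(ξ / σ ^ 2) * gaussDensity σ ξ))) ξ :=
    ((hasDerivAt_id ξ).mul (hasDerivAt_phi hσ ξ)).const_mul _
  have h4 : HasDerivAt (fun x => (σ ^ 2 * gaussDensity σ x) ^ 2 / Qi σ x)
      ((2 * (σ ^ 2 * gaussDensity σ ξ) ^ 1 * (σ ^ 2 * (-(ξ / σ ^ 2) * gaussDensity σ ξ)) * Qi σ ξ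
        - (σ ^ 2 * gaussDensity σ ξ) ^ 2 * (-gaussDensity σ ξ)) / Qi σ ξ ^ 2) ξ := by
    exact HasDerivAt.div (((hasDerivAt_phi hσ ξ).const_mul (σ ^ 2)).pow 2)
      (hasDerivAt_Qi hσ ξ) hQ.ne'
  have h3' : HasDerivAt (fun x => σ ^ 2 * x * gaussDensity σ x)
      (σ ^ 2 * (1 * gaussDensity σ ξ + ξ * (-(ξ / σ ^ 2) * gaussDensity σ ξ))) ξ := by
    apply h3.congr_deriv rfl |>.congr_of_eventuallyEq
    filter_upwards with x
    ring
  have hsum := ((h1.add h2).add h3').sub h4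
  refine hsum.congr_deriv ?_
  have hσ2 : (σ:ℝ) ^ 2 ≠ 0 := by positivity
  field_simp
  ring

lemma hasDerivAt_entropy (hσ : 0 < σ) (ξ : ℝ) :
    HasDerivAt (quantEntropy σ)
      (gaussDensity σ ξ * (Real.log (Qi σ ξ) - Real.log (cellProb σ ξ)) / Real.log 2) ξ := by
  have h0 := cellProb_pos' hσ ξ
  have h1 := cellProb_lt_one hσ ξ
  have heq : quantEntropy σ = fun ξ =>
      (-(cellProb σ ξ) * Real.log (cellProb σ ξ)
        - (1 - cellProb σ ξ) * Real.log (1 - cellProb σ ξ)) / Real.log 2 := by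
    funext x
    rw [quantEntropy, Real.logb, Real.logb]
    ring
  rw [heq]
  have hp := hasDerivAt_cellProb hσ ξ
  have hlogp : HasDerivAt (fun x => Real.log (cellProb σ x))
      ((cellProb σ ξ)⁻¹ * gaussDensity σ ξ) ξ :=
    (Real.hasDerivAt_log h0.ne').comp ξ hp
  have h1s : HasDerivAt (fun x => 1 - cellProb σ x) (-gaussDensity σ ξ) ξ := by
    simpa using hp.const_sub 1
  have hlogq : HasDerivAt (fun x => Real.log (1 - cellProb σ x))
      ((1 - cellProb σ ξ)⁻¹ * (-gaussDensity σ ξ)) ξ :=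
    by
      have hl : HasDerivAt Real.log (1 - cellProb σ ξ)⁻¹ (1 - cellProb σ ξ) :=
        Real.hasDerivAt_log (by linarith : (1:ℝ) - cellProb σ ξ ≠ 0)
      exact hl.comp ξ h1s
  have hA : HasDerivAt (fun x => -(cellProb σ x) * Real.log (cellProb σ x))
      ((-gaussDensity σ ξ) * Real.log (cellProb σ ξ)
        + (-(cellProb σ ξ)) * ((cellProb σ ξ)⁻¹ * gaussDensity σ ξ)) ξ :=
    hp.neg.mul hlogp
  have hB : HasDerivAt (fun x => (1 - cellProb σ x) * Real.log (1 - cellProb σ x))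
      ((-gaussDensity σ ξ) * Real.log (1 - cellProb σ ξ)
        + (1 - cellProb σ ξ) * ((1 - cellProb σ ξ)⁻¹ * (-gaussDensity σ ξ))) ξ :=
    h1s.mul hlogq
  have := (hA.sub hB).div_const (Real.log 2)
  refine this.congr_deriv ?_
  rw [← one_sub_cellProb hσ ξ]
  have hq1 : (0:ℝ) < 1 - cellProb σ ξ := by linarith
  field_simp
  ring


lemma tendsto_log_div_sq : Tendsto (fun ξ : ℝ => Real.log ξ / ξ ^ 2) atTop (nhds 0) := by
  have h1 : Tendsto (fun ξ : ℝ => Real.log ξ / ξ) atTop (nhds 0) :=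
    Real.isLittleO_log_id_atTop.tendsto_div_nhds_zero
  have h2 : Tendsto (fun ξ : ℝ => ξ⁻¹) atTop (nhds 0) := tendsto_inv_atTop_zero
  have := h1.mul h2
  rw [mul_zero] at this
  apply this.congr
  intro ξ
  rw [← div_eq_mul_inv, div_div, ← sq]

lemma tendsto_inv_sq : Tendsto (fun ξ : ℝ => (ξ ^ 2)⁻¹) atTop (nhds 0) := by
  apply tendsto_inv_atTop_zero.comp
  exact tendsto_pow_atTop two_ne_zero

lemma tendsto_Qi_zero (hσ : 0 < σ) : Tendsto (Qi σ) atTop (nhds 0) := by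
  have hub : Tendsto (fun ξ => σ ^ 2 * gaussDensity σ ξ / ξ) atTop (nhds 0) := by
    have := ((tendsto_phi hσ).const_mul (σ ^ 2)).mul tendsto_inv_atTop_zero
    rw [mul_zero] at this
    apply this.congr
    intro ξ
    rw [← div_eq_mul_inv]
  apply tendsto_of_tendsto_of_tendsto_of_le_of_le' tendsto_const_nhds hub
  · filter_upwards with ξ using (Qi_pos hσ ξ).le
  · filter_upwards [eventually_gt_atTop (0:ℝ)] with ξ hξ using mills_upper hσ hξ

lemma tendsto_cellProb_one (hσ : 0 < σ) : Tendsto (cellProb σ) atTop (nhds 1) := by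
  have : cellProb σ = fun ξ => 1 - Qi σ ξ := funext fun ξ => by
    have := one_sub_cellProb hσ ξ; linarith
  rw [this]
  simpa using (tendsto_Qi_zero hσ).const_sub 1

lemma tendsto_log_cellProb (hσ : 0 < σ) :
    Tendsto (fun ξ => Real.log (cellProb σ ξ)) atTop (nhds 0) := by
  have h := (Real.continuousAt_log one_ne_zero).tendsto.comp (tendsto_cellProb_one hσ)
  rw [Real.log_one] at h
  exact h

/-- the normalized tail ratio `t ξ = ξ · Qi / (σ² φ)` tends to 1 -/
lemma tendsto_t (hσ : 0 < σ) :
    Tendsto (fun ξ => ξ * (Qi σ ξ / (σ ^ 2 * gaussDensity σ ξ))) atTop (nhds 1) := by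
  have hlow : Tendsto (fun ξ : ℝ => ξ ^ 2 / (ξ ^ 2 + σ ^ 2)) atTop (nhds 1) := by
    have h2 : Tendsto (fun ξ : ℝ => σ ^ 2 / (ξ ^ 2 + σ ^ 2)) atTop (nhds 0) := by
      apply Tendsto.div_atTop tendsto_const_nhds
      apply Filter.tendsto_atTop_add_const_right
      exact tendsto_pow_atTop two_ne_zero
    have h3 := h2.const_sub 1
    rw [sub_zero] at h3
    apply h3.congr'
    filter_upwards [eventually_gt_atTop (0:ℝ)] with ξ hξ
    have hden : ξ ^ 2 + σ ^ 2 ≠ 0 := by positivity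
    rw [one_sub_div hden]
    ring
  apply tendsto_of_tendsto_of_tendsto_of_le_of_le' hlow tendsto_const_nhds
  · filter_upwards [eventually_gt_atTop (0:ℝ)] with ξ hξ
    have hP := phi_pos hσ ξ
    have hA : (0:ℝ) < σ ^ 2 * gaussDensity σ ξ := by positivity
    have hden : (0:ℝ) < ξ ^ 2 + σ ^ 2 := by positivity
    calc ξ ^ 2 / (ξ ^ 2 + σ ^ 2)
        = ξ * ((σ ^ 2 * ξ / (ξ ^ 2 + σ ^ 2) * gaussDensity σ ξ) / (σ ^ 2 * gaussDensity σ ξ)) := by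
          field_simp
      _ ≤ ξ * (Qi σ ξ / (σ ^ 2 * gaussDensity σ ξ)) := by
          apply mul_le_mul_of_nonneg_left _ hξ.le
          exact div_le_div_of_nonneg_right (mills_lower hσ ξ) hA.le
  · filter_upwards [eventually_gt_atTop (0:ℝ)] with ξ hξ
    have hP := phi_pos hσ ξ
    have hA : (0:ℝ) < σ ^ 2 * gaussDensity σ ξ := by positivity
    calc ξ * (Qi σ ξ / (σ ^ 2 * gaussDensity σ ξ))
        ≤ ξ * ((σ ^ 2 * gaussDensity σ ξ / ξ) / (σ ^ 2 * gaussDensity σ ξ)) := by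
          apply mul_le_mul_of_nonneg_left _ hξ.le
          exact div_le_div_of_nonneg_right (mills_upper hσ hξ) hA.le
      _ = 1 := by field_simp


lemma log_phi (hσ : 0 < σ) (ξ : ℝ) :
    Real.log (gaussDensity σ ξ)
      = Real.log (1 / Real.sqrt (2 * π * σ ^ 2)) - ξ ^ 2 / (2 * σ ^ 2) := by
  have hc : (1:ℝ) / Real.sqrt (2 * π * σ ^ 2) ≠ 0 := by
    have := sqrt_pos' (σ := σ) hσ
    positivity
  rw [gaussDensity, Real.log_mul hc (Real.exp_ne_zero _), Real.log_exp]
  ring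

lemma tendsto_logr (hσ : 0 < σ) :
    Tendsto (fun ξ => Real.log (Qi σ ξ / (σ ^ 2 * gaussDensity σ ξ)) / ξ ^ 2) atTop (nhds 0) := by
  have hub : Tendsto (fun ξ : ℝ => -Real.log ξ / ξ ^ 2) atTop (nhds 0) := by
    have := tendsto_log_div_sq.neg
    rw [neg_zero] at this
    apply this.congr
    intro ξ
    rw [neg_div]
  have hlb : Tendsto (fun ξ : ℝ => (-Real.log ξ - Real.log 2) / ξ ^ 2) atTop (nhds 0) := by
    have h2 : Tendsto (fun ξ : ℝ => Real.log 2 * (ξ ^ 2)⁻¹) atTop (nhds 0) := by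
      simpa using tendsto_inv_sq.const_mul (Real.log 2)
    have := hub.sub h2
    rw [sub_zero] at this
    apply this.congr
    intro ξ
    rw [sub_div, neg_div]
    ring_nf
  apply tendsto_of_tendsto_of_tendsto_of_le_of_le' hlb hub
  · filter_upwards [eventually_ge_atTop (max σ 1)] with ξ hξ
    have hξ1 : (1:ℝ) ≤ ξ := le_trans (le_max_right σ 1) hξ
    have hξσ : σ ≤ ξ := le_trans (le_max_left σ 1) hξ
    have hξ0 : (0:ℝ) < ξ := lt_of_lt_of_le one_pos hξ1
    have hP := phi_pos hσ ξ
    have hQ := Qi_pos hσ ξ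
    have hA : (0:ℝ) < σ ^ 2 * gaussDensity σ ξ := by positivity
    have hden : (0:ℝ) < ξ ^ 2 + σ ^ 2 := by positivity
    apply div_le_div_of_nonneg_right _ (by positivity : (0:ℝ) ≤ ξ ^ 2) |>.trans_eq rfl
    -- -log ξ - log 2 ≤ log (Qi/(σ²φ))
    have h1 : ξ / (ξ ^ 2 + σ ^ 2) ≤ Qi σ ξ / (σ ^ 2 * gaussDensity σ ξ) := by
      rw [div_le_div_iff₀ hden hA]
      have := mills_lower hσ ξ
      rw [div_mul_eq_mul_div, div_le_iff₀ hden] at this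
      nlinarith
    have h2 : Real.log (ξ / (ξ ^ 2 + σ ^ 2)) ≤ Real.log (Qi σ ξ / (σ ^ 2 * gaussDensity σ ξ)) :=
      Real.log_le_log (by positivity) h1
    have h3 : -Real.log ξ - Real.log 2 ≤ Real.log (ξ / (ξ ^ 2 + σ ^ 2)) := by
      rw [Real.log_div hξ0.ne' hden.ne']
      have h4 : Real.log (ξ ^ 2 + σ ^ 2) ≤ Real.log (2 * ξ ^ 2) := by
        apply Real.log_le_log hden
        nlinarith
      have h5 : Real.log (2 * ξ ^ 2) = Real.log 2 + 2 * Real.log ξ := by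
        rw [Real.log_mul two_ne_zero (by positivity), Real.log_pow]
        push_cast
        ring
      have h6 : 0 ≤ Real.log ξ := Real.log_nonneg hξ1
      linarith
    linarith
  · filter_upwards [eventually_ge_atTop (max σ 1)] with ξ hξ
    have hξ1 : (1:ℝ) ≤ ξ := le_trans (le_max_right σ 1) hξ
    have hξ0 : (0:ℝ) < ξ := lt_of_lt_of_le one_pos hξ1
    have hP := phi_pos hσ ξ
    have hQ := Qi_pos hσ ξ
    have hA : (0:ℝ) < σ ^ 2 * gaussDensity σ ξ := by positivity
    apply div_le_div_of_nonneg_right _ (by positivity : (0:ℝ) ≤ ξ ^ 2) |>.trans_eq rfl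
    have h1 : Qi σ ξ / (σ ^ 2 * gaussDensity σ ξ) ≤ 1 / ξ := by
      rw [div_le_div_iff₀ hA hξ0]
      have hm := mul_le_mul_of_nonneg_right (mills_upper hσ hξ0) hξ0.le
      have he : σ ^ 2 * gaussDensity σ ξ / ξ * ξ = σ ^ 2 * gaussDensity σ ξ := by
        field_simp
      linarith
    have h2 : Real.log (Qi σ ξ / (σ ^ 2 * gaussDensity σ ξ)) ≤ Real.log (1 / ξ) :=
      Real.log_le_log (by positivity) h1
    rw [Real.log_div one_ne_zero hξ0.ne', Real.log_one] at h2
    linarith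

lemma tendsto_F (hσ : 0 < σ) :
    Tendsto (fun ξ => (Real.log (Qi σ ξ) - Real.log (cellProb σ ξ)) / ξ ^ 2) atTop
      (nhds (-(1 / (2 * σ ^ 2)))) := by
  have hK : Tendsto (fun ξ : ℝ =>
      (Real.log (σ ^ 2) + Real.log (1 / Real.sqrt (2 * π * σ ^ 2))) * (ξ ^ 2)⁻¹) atTop
      (nhds 0) := by
    simpa using tendsto_inv_sq.const_mul _
  have hlogp : Tendsto (fun ξ => Real.log (cellProb σ ξ) * (ξ ^ 2)⁻¹) atTop (nhds 0) := by
    have := (tendsto_log_cellProb hσ).mul tendsto_inv_sq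
    rwa [mul_zero] at this
  have hsum := ((hK.add (tendsto_const_nhds
      (x := -(1 / (2 * σ ^ 2))) (f := atTop))).add (tendsto_logr hσ)).sub hlogp
  rw [zero_add, add_zero, sub_zero] at hsum
  apply hsum.congr'
  filter_upwards [eventually_gt_atTop (0:ℝ)] with ξ hξ0
  have hP := phi_pos hσ ξ
  have hQ := Qi_pos hσ ξ
  have hA : (0:ℝ) < σ ^ 2 * gaussDensity σ ξ := by positivity
  have hlogQi : Real.log (Qi σ ξ) = Real.log (Qi σ ξ / (σ ^ 2 * gaussDensity σ ξ))
      + Real.log (σ ^ 2) + Real.log (1 / Real.sqrt (2 * π * σ ^ 2)) - ξ ^ 2 / (2 * σ ^ 2) := by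
    rw [Real.log_div hQ.ne' hA.ne', Real.log_mul (by positivity) hP.ne', log_phi hσ ξ]
    ring
  rw [hlogQi]
  have hξ2 : (ξ:ℝ) ^ 2 ≠ 0 := by positivity
  have hσ2 : (2:ℝ) * σ ^ 2 ≠ 0 := by positivity
  field_simp
  ring


lemma log_two_pos : (0:ℝ) < Real.log 2 := Real.log_pos one_lt_two

lemma tendsto_piece2 (hσ : 0 < σ) :
    Tendsto (fun ξ => (ξ * (Qi σ ξ / (σ ^ 2 * gaussDensity σ ξ))) ^ 2
      / (2 * (ξ * (Qi σ ξ / (σ ^ 2 * gaussDensity σ ξ))) - 1)) atTop (nhds 1) := by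
  have hnum := (tendsto_t hσ).pow 2
  have hden := ((tendsto_t hσ).const_mul 2).sub_const 1
  have h := hnum.div hden (by norm_num : (2:ℝ) * 1 - 1 ≠ 0)
  norm_num at h
  exact h.congr fun ξ => rfl

theorem threshold_quantizer_slope' (hσ : 0 < σ) :
    Filter.Tendsto (fun ξ : ℝ => deriv (quantEntropy σ) ξ / deriv (quantDistortion σ) ξ)
      Filter.atTop (nhds (-1 / (2 * σ ^ 2 * Real.log 2))) := by
  have hmain := ((tendsto_F hσ).mul (tendsto_piece2 hσ)).div_const (Real.log 2)
  have hval : -(1 / (2 * σ ^ 2)) * 1 / Real.log 2 = -1 / (2 * σ ^ 2 * Real.log 2) := by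
    have h2 : Real.log 2 ≠ 0 := log_two_pos.ne'
    have hσ2 : (σ:ℝ) ^ 2 ≠ 0 := by positivity
    field_simp
  rw [hval] at hmain
  apply hmain.congr'
  filter_upwards [eventually_gt_atTop (max σ 1)] with ξ hξ
  have hξ1 : (1:ℝ) < ξ := lt_of_le_of_lt (le_max_right σ 1) hξ
  have hξσ : σ < ξ := lt_of_le_of_lt (le_max_left σ 1) hξ
  have hξ0 : (0:ℝ) < ξ := lt_trans one_pos hξ1
  have hP := phi_pos hσ ξ
  have hQ := Qi_pos hσ ξ
  have hp0 := cellProb_pos' hσ ξ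
  have hσ2 : (0:ℝ) < σ ^ 2 := by positivity
  have hden2 : (0:ℝ) < ξ ^ 2 + σ ^ 2 := by positivity
  have hml : σ ^ 2 * ξ * gaussDensity σ ξ ≤ Qi σ ξ * (ξ ^ 2 + σ ^ 2) := by
    have h := mills_lower hσ ξ
    rw [div_mul_eq_mul_div, div_le_iff₀ hden2] at h
    linarith
  have hss : σ ^ 2 < ξ ^ 2 := by nlinarith
  have hpos : σ ^ 2 * gaussDensity σ ξ < 2 * ξ * Qi σ ξ := by
    nlinarith [mul_le_mul_of_nonneg_left hml (by positivity : (0:ℝ) ≤ 2 * ξ),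
      mul_pos hσ2 hP, mul_pos hQ hξ0, mul_pos (mul_pos hσ2 hP) (sub_pos.2 hss)]
  have hE := (hasDerivAt_entropy hσ ξ).deriv
  have hD := (hasDerivAt_distortion hσ ξ).deriv
  rw [hE, hD]
  have h2 : Real.log 2 ≠ 0 := log_two_pos.ne'
  have hdennz : (0:ℝ) < 2 * ξ * Qi σ ξ - σ ^ 2 * gaussDensity σ ξ := by linarith
  have hA : (0:ℝ) < σ ^ 2 * gaussDensity σ ξ := mul_pos hσ2 hP
  have h2t : 2 * (ξ * (Qi σ ξ / (σ ^ 2 * gaussDensity σ ξ))) - 1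
      = (2 * ξ * Qi σ ξ - σ ^ 2 * gaussDensity σ ξ) / (σ ^ 2 * gaussDensity σ ξ) := by
    field_simp
  have hne1 : 2 * (ξ * (Qi σ ξ / (σ ^ 2 * gaussDensity σ ξ))) - 1 ≠ 0 := by
    rw [h2t]
    positivity
  have hT : (ξ * (Qi σ ξ / (σ ^ 2 * gaussDensity σ ξ))) ^ 2
        / (2 * (ξ * (Qi σ ξ / (σ ^ 2 * gaussDensity σ ξ))) - 1)
      = ξ ^ 2 * Qi σ ξ ^ 2
        / (σ ^ 2 * gaussDensity σ ξ * (2 * ξ * Qi σ ξ - σ ^ 2 * gaussDensity σ ξ)) := by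
    rw [div_eq_div_iff hne1 (by positivity)]
    field_simp
  rw [hT]
  field_simp

end TQS

/-- STATEMENT 18: `lim_{ξ → ∞} R′(ξ)/D′(ξ) = −1/(2σ²·ln 2)`: the slope of the operational
rate-distortion curve of the binary threshold quantizer coincides, at zero rate, with the slope
`−log₂(e)/(2σ²)` of the Gaussian rate-distortion function. -/
theorem threshold_quantizer_slope (σ : ℝ) (hσ : 0 < σ) :
    Filter.Tendsto (fun ξ : ℝ => deriv (quantEntropy σ) ξ / deriv (quantDistortion σ) ξ)
      Filter.atTop (nhds (-1 / (2 * σ ^ 2 * Real.log 2))) :=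
  TQS.threshold_quantizer_slope' hσ
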